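/- If l is a prime number, then the multinomial Catalan number C_l(l−1) = ((l+1)(l−1))!/(l^l · ((l−1)!)^{l+1}) is not an integer. -/
import Mathlib


/-- If `l` is a prime number, then the multinomial Catalan number
`C_l(l−1) = ((l+1)(l−1))!/(l^l · ((l−1)!)^{l+1})` is not an integer. -/
theorem stmt9 (l : ℕ) (hl : l.Prime) :
    ¬ l ^ l * ((l - 1).factorial) ^ (l + 1) ∣ ((l + 1) * (l - 1)).factorial := by
  intro h
  have h2 := hl.two_le
  have hdvd : l ^ l ∣ ((l + 1) * (l - 1)).factorial := (dvd_mul_right _ _).trans h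
  obtain ⟨k, rfl⟩ : ∃ k, l = k + 2 := ⟨l - 2, by omega⟩
  have hs1 : k + 2 - 1 = k + 1 := rfl
  rw [hs1] at hdvd
  have hb : Nat.log (k + 2) ((k + 2 + 1) * (k + 1)) < 3 := by
    apply Nat.log_lt_of_lt_pow (by positivity)
    calc (k + 2 + 1) * (k + 1) < (k + 2) ^ 2 := by nlinarith
      _ ≤ (k + 2) ^ 3 := Nat.pow_le_pow_right (by omega) (by omega)
  rw [Nat.Prime.pow_dvd_factorial_iff hl hb] at hdvd
  rw [show Finset.Ico 1 3 = {1, 2} from rfl, Finset.sum_insert (by decide),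
    Finset.sum_singleton] at hdvd
  have e1 : (k + 2 + 1) * (k + 1) / (k + 2) ^ 1 = k + 1 := by
    rw [pow_one, show (k + 2 + 1) * (k + 1) = (k + 1) + (k + 1) * (k + 2) by ring,
      Nat.add_mul_div_right _ _ (by omega), Nat.div_eq_of_lt (by omega)]
    omega
  have e2 : (k + 2 + 1) * (k + 1) / (k + 2) ^ 2 = 0 :=
    Nat.div_eq_of_lt (by nlinarith)
  rw [e1, e2] at hdvd
  omega
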